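/- Under the model Y = f(X) + ε with ε independent of (X, X'_j), E[ε] = 0 and Var(ε) = σ² ∈ (0,∞), and with f(X) and f(X_{(j)}) square-integrable, the permutation importance satisfies the identity I(X_j) = E[(f(X) − f(X_{(j)}))²]. -/

import Mathlib

open MeasureTheory ProbabilityTheory

/-- Under the model `Y = f(X) + ε` with `ε` independent of `(X, X'ⱼ)`, `E[ε] = 0`,
`Var(ε) = σ² ∈ (0,∞)`, and `f(X)` and `f(X₍ⱼ₎)` square-integrable, the permutation
importance satisfies `I(Xⱼ) = E[(f(X) − f(X₍ⱼ₎))²]`. -/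
theorem permutation_importance_eq
    {Ω : Type*} [MeasurableSpace Ω] (P : Measure Ω) [IsProbabilityMeasure P]
    {p : ℕ} (j : Fin p) (X : Ω → (Fin p → ℝ)) (X' : Ω → ℝ) (ε : Ω → ℝ) (Y : Ω → ℝ)
    (f : (Fin p → ℝ) → ℝ) (σ2 : ℝ)
    (hX : Measurable X) (hX' : Measurable X') (hε : Measurable ε) (hf : Measurable f)
    (hident : IdentDistrib X' (fun ω => X ω j) P P)
    (hXindep : IndepFun X' X P)
    (hY : ∀ ω, Y ω = f (X ω) + ε ω)
    (hεindep : IndepFun ε (fun ω => (X ω, X' ω)) P)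
    (hεmean : ∫ ω, ε ω ∂P = 0)
    (hεvar : variance ε P = σ2) (hσ2 : 0 < σ2)
    (hL2 : MemLp (fun ω => f (X ω)) 2 P)
    (hL2' : MemLp (fun ω => f (Function.update (X ω) j (X' ω))) 2 P) :
    (∫ ω, (Y ω - f (Function.update (X ω) j (X' ω))) ^ 2 ∂P)
      - (∫ ω, (Y ω - f (X ω)) ^ 2 ∂P)
      = ∫ ω, (f (X ω) - f (Function.update (X ω) j (X' ω))) ^ 2 ∂P := by
  set G : Ω → ℝ := fun ω => f (Function.update (X ω) j (X' ω)) with hG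
  set F : Ω → ℝ := fun ω => f (X ω) with hF
  -- ε is in L²
  have hεL2 : MemLp ε 2 P := by
    by_contra h
    rw [variance, evariance_eq_top hε.aestronglyMeasurable h] at hεvar
    simp at hεvar
    exact absurd hεvar.symm hσ2.ne'
  -- D := F - G is in L²
  have hDL2 : MemLp (fun ω => F ω - G ω) 2 P := hL2.sub hL2'
  -- independence of ε and F - G
  have hmeas : Measurable (fun q : (Fin p → ℝ) × ℝ => f q.1 - f (Function.update q.1 j q.2)) :=
    (hf.comp measurable_fst).sub (hf.comp measurable_update')
  have hindep : IndepFun ε (fun ω => F ω - G ω) P := by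
    have := hεindep.comp measurable_id hmeas
    exact this
  -- integrabilities
  have hεi : Integrable ε P := hεL2.integrable one_le_two
  have hDi : Integrable (fun ω => F ω - G ω) P := hDL2.integrable one_le_two
  have hεsq : Integrable (fun ω => ε ω ^ 2) P :=
    (memLp_two_iff_integrable_sq hεL2.aestronglyMeasurable).mp hεL2
  have hDsq : Integrable (fun ω => (F ω - G ω) ^ 2) P :=
    (memLp_two_iff_integrable_sq hDL2.aestronglyMeasurable).mp hDL2
  have hSsq : Integrable (fun ω => (ε ω + (F ω - G ω)) ^ 2) P := by
    have h := hεL2.add hDL2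
    exact (memLp_two_iff_integrable_sq h.aestronglyMeasurable).mp h
  have hεD : Integrable (fun ω => ε ω * (F ω - G ω)) P := by
    have : (fun ω => ε ω * (F ω - G ω))
        = fun ω => ((ε ω + (F ω - G ω)) ^ 2 - ε ω ^ 2 - (F ω - G ω) ^ 2) / 2 := by
      funext ω; ring
    rw [this]
    exact ((hSsq.sub hεsq).sub hDsq).div_const 2
  -- cross term vanishes
  have hcross : ∫ ω, ε ω * (F ω - G ω) ∂P = 0 := by
    have := hindep.integral_mul_eq_mul_integral hεi.aestronglyMeasurable hDi.aestronglyMeasurable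
    rw [show (ε * fun ω => F ω - G ω) = fun ω => ε ω * (F ω - G ω) from rfl] at this
    rw [this, hεmean, zero_mul]
  -- expand
  have h1 : (fun ω => (Y ω - G ω) ^ 2)
      = fun ω => (F ω - G ω) ^ 2 + 2 * (ε ω * (F ω - G ω)) + ε ω ^ 2 := by
    funext ω; rw [hY ω]; ring
  have h2 : (fun ω => (Y ω - F ω) ^ 2) = fun ω => ε ω ^ 2 := by
    funext ω; rw [hY ω]; ring
  rw [h1, h2]
  rw [integral_add (by exact (hDsq.add (hεD.const_mul 2))) hεsq,
      integral_add hDsq (hεD.const_mul 2), integral_const_mul, hcross]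
  ring
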